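/- Let R be a Noetherian local domain that is not complete with respect to the m-adic topology. Then Hom_R(R̂, R) = 0; in particular R̂ is neither free nor finitely generated as an R-module. -/

import Mathlib

open IsLocalRing

open scoped TensorProduct

namespace AdicHelper

open AdicCompletion

variable {R : Type*} [CommRing R] (I : Ideal R)

lemma smul_top_R (J : Ideal R) : (J • ⊤ : Submodule R R) = J := by
  rw [Ideal.smul_eq_mul, Ideal.mul_top]

/-- The constant Cauchy sequence. -/
noncomputable def const (r : R) : AdicCauchySequence I R :=
  AdicCauchySequence.mk I R (fun _ => r) (fun _ => rfl)

@[simp] lemma const_apply (r : R) (k : ℕ) : (const I r) k = r := rfl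

lemma mk_const (r : R) : AdicCompletion.mk I R (const I r) = of I R r := by
  ext n
  rfl

lemma key [IsNoetherianRing R] (a : AdicCauchySequence I R) (n : ℕ) (ha : a n ∈ I ^ n) :
    AdicCompletion.mk I R a ∈ (I ^ n • ⊤ : Submodule R (AdicCompletion I R)) := by
  obtain ⟨s, hs⟩ := IsNoetherian.noetherian (I ^ n : Ideal R)
  have hspan : Submodule.span R (Set.range (Subtype.val : (↑s : Set R) → R))
      = ((I ^ n : Ideal R) : Submodule R R) := by
    rw [Subtype.range_coe]; exact hs
  have hdelta : ∀ k : ℕ, a (k + 1 + n) - a (k + n) ∈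
      (I ^ k) • Submodule.span R (Set.range (Subtype.val : (↑s : Set R) → R)) := by
    intro k
    rw [hspan]
    have h1 : a (k + n) - a (k + 1 + n) ∈ (I ^ (k + n) • ⊤ : Submodule R R) :=
      SModEq.sub_mem.mp (a.property (show k + n ≤ k + 1 + n by omega))
    have h2 : a (k + 1 + n) - a (k + n) ∈ (I ^ (k + n) • ⊤ : Submodule R R) := by
      simpa [neg_sub] using Submodule.neg_mem _ h1
    have h3 : (I ^ (k + n) • ⊤ : Submodule R R) ≤ (I ^ k) • ((I ^ n : Ideal R) : Submodule R R) := by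
      rw [smul_top_R, Ideal.smul_eq_mul, ← pow_add]
    exact h3 h2
  choose b hbI hbsum using fun k =>
    (Submodule.mem_ideal_smul_span_iff_exists_sum (I ^ k) _ _).mp (hdelta k)
  let seq : (↑s : Set R) → AdicCauchySequence I R := fun g =>
    AdicCauchySequence.mk I R (fun k => ∑ l ∈ Finset.range k, b l g) (fun k => by
      show (∑ l ∈ Finset.range k, b l g) ≡ (∑ l ∈ Finset.range (k+1), b l g) [SMOD (I ^ k • ⊤ : Submodule R R)]
      rw [SModEq.sub_mem, Finset.sum_range_succ]
      have : (∑ l ∈ Finset.range k, b l g) - ((∑ l ∈ Finset.range k, b l g) + b k g)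
          = -(b k g) := by ring
      rw [this]
      refine Submodule.neg_mem _ ?_
      rw [smul_top_R]
      exact hbI k g)
  have hid : AdicCompletion.mk I R a = of I R (a n) +
      ∑ g ∈ s.attach, (g : R) • AdicCompletion.mk I R (seq ⟨g.1, g.2⟩) := by
    ext m
    rw [val_add_apply, val_sum_apply, of_apply, mk_apply_coe]
    have hval : ∀ g : {x // x ∈ s}, ((g : R) • AdicCompletion.mk I R (seq ⟨g.1, g.2⟩)).val m
        = Submodule.mkQ _ ((g : R) * ∑ l ∈ Finset.range m, b l ⟨g.1, g.2⟩) := by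
      intro g
      rw [val_smul_apply, mk_apply_coe]
      show (g : R) • (Submodule.mkQ (I ^ m • ⊤ : Submodule R R)) (∑ l ∈ Finset.range m, b l ⟨g.1, g.2⟩)
          = _
      rw [← map_smul]
      rfl
    simp only [hval]
    rw [← map_sum, ← map_add]
    rw [Submodule.mkQ_apply, Submodule.mkQ_apply, Submodule.Quotient.eq]
    have hsum : ∑ g ∈ s.attach, (g : R) * ∑ l ∈ Finset.range m, b l ⟨g.1, g.2⟩
        = ∑ l ∈ Finset.range m, (a (l + 1 + n) - a (l + n)) := by
      have : ∀ l, (b l).sum (fun i c => c • (i : R)) = ∑ g ∈ s.attach, b l ⟨g.1, g.2⟩ * (g : R) := by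
        intro l
        rw [Finsupp.sum_fintype]
        · rw [← Finset.univ_eq_attach]
          simp [smul_eq_mul]
        · intro i; simp
      simp only [Finset.mul_sum]
      rw [Finset.sum_comm]
      refine Finset.sum_congr rfl fun l _ => ?_
      rw [← hbsum l, this l]
      refine Finset.sum_congr rfl fun g _ => mul_comm _ _
    rw [hsum, Finset.sum_range_sub (fun l => a (l + n))]
    have : a m - (a n + (a (m + n) - a (0 + n))) = a m - a (m + n) := by
      rw [zero_add]; ring
    rw [this]
    exact SModEq.sub_mem.mp (a.property (show m ≤ m + n by omega))
  rw [hid]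
  refine Submodule.add_mem _ ?_ (Submodule.sum_mem _ fun g _ => ?_)
  · have h4 : of I R (a n) = (a n) • of I R 1 := by
      rw [← map_smul, smul_eq_mul, mul_one]
    rw [h4]
    exact Submodule.smul_mem_smul ha Submodule.mem_top
  · refine Submodule.smul_mem_smul ?_ Submodule.mem_top
    rw [← hs]
    exact Submodule.subset_span g.2

lemma sub_of_mem [IsNoetherianRing R] (a : AdicCauchySequence I R) (n : ℕ) :
    AdicCompletion.mk I R a - of I R (a n) ∈ (I ^ n • ⊤ : Submodule R (AdicCompletion I R)) := by
  have h : AdicCompletion.mk I R a - of I R (a n) = AdicCompletion.mk I R (a - const I (a n)) := by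
    rw [map_sub, mk_const]
  rw [h]
  refine key I _ n ?_
  have : (a - const I (a n)) n = a n - a n := rfl
  rw [this, sub_self]
  exact Submodule.zero_mem _

lemma mem_of_of_mem (n : ℕ) (r : R)
    (h : of I R r ∈ (I ^ n • ⊤ : Submodule R (AdicCompletion I R))) : r ∈ I ^ n := by
  have h1 : eval I R n (of I R r) ∈
      Submodule.map (eval I R n) (I ^ n • ⊤ : Submodule R (AdicCompletion I R)) :=
    Submodule.mem_map_of_mem h
  rw [Submodule.map_smul''] at h1
  have h2 : (I ^ n) • Submodule.map (eval I R n) ⊤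
      ≤ (I ^ n • ⊤ : Submodule R (R ⧸ (I ^ n • ⊤ : Submodule R R))) :=
    smul_mono_right _ le_top
  have h3 : (I ^ n • ⊤ : Submodule R (R ⧸ (I ^ n • ⊤ : Submodule R R))) = ⊥ := by
    rw [← Submodule.range_mkQ (I ^ n • ⊤ : Submodule R R), ← Submodule.map_top,
      ← Submodule.map_smul'']
    rw [eq_bot_iff]
    rintro x hx
    obtain ⟨y, hy, rfl⟩ := hx
    exact (Submodule.Quotient.mk_eq_zero _).mpr hy
  have h4 := h2 h1
  rw [h3, Submodule.mem_bot, eval_of, Submodule.mkQ_apply, Submodule.Quotient.mk_eq_zero] at h4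
  rwa [smul_top_R] at h4

lemma hom_eq_smul [IsNoetherianRing R] (f : AdicCompletion I R →ₗ[R] R) (x : AdicCompletion I R) :
    of I R (f x) = f (of I R 1) • x := by
  rw [← sub_eq_zero]
  refine IsHausdorff.haus (inferInstance : IsHausdorff I (AdicCompletion I R)) _ fun n => ?_
  rw [SModEq.zero]
  obtain ⟨a, rfl⟩ := AdicCompletion.mk_surjective I R x
  set c := f (of I R 1) with hc
  set y := AdicCompletion.mk I R a - of I R (a n) with hy
  have h1 : y ∈ (I ^ n • ⊤ : Submodule R (AdicCompletion I R)) := sub_of_mem I a n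
  have h2 : f y ∈ I ^ n := by
    have h := Submodule.mem_map_of_mem (f := f) h1
    rw [Submodule.map_smul''] at h
    have h3 : (I ^ n) • Submodule.map f ⊤ ≤ (I ^ n • ⊤ : Submodule R R) :=
      smul_mono_right _ le_top
    have := h3 h
    rwa [smul_top_R] at this
  have hkey : of I R (f (AdicCompletion.mk I R a)) - c • AdicCompletion.mk I R a
      = of I R (f y) - c • y := by
    have hsplit : AdicCompletion.mk I R a = y + of I R (a n) := by rw [hy]; ring
    rw [hsplit, map_add, map_add, smul_add]
    have e1 : f (of I R (a n)) = a n * c := by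
      have : of I R (a n) = (a n) • of I R 1 := by rw [← map_smul, smul_eq_mul, mul_one]
      rw [this, map_smul, smul_eq_mul]
    have e2 : of I R (a n * c) = c • of I R (a n) := by
      rw [← map_smul, smul_eq_mul, mul_comm]
    rw [e1, e2]
    abel
  rw [hkey]
  refine Submodule.sub_mem _ ?_ (Submodule.smul_mem _ _ h1)
  have : of I R (f y) = (f y) • of I R 1 := by rw [← map_smul, smul_eq_mul, mul_one]
  rw [this]
  exact Submodule.smul_mem_smul h2 Submodule.mem_top

end AdicHelper

open AdicHelper AdicCompletion

/-- Let `R` be a Noetherian local domain that is not `m`-adically complete. Then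
`Hom_R(R̂, R) = 0`; in particular `R̂` is neither free nor finitely generated over `R`. -/
theorem hom_adicCompletion_eq_zero
    (R : Type*) [CommRing R] [IsNoetherianRing R] [IsLocalRing R] [IsDomain R]
    (hR : ¬ IsAdicComplete (maximalIdeal R) R) :
    Subsingleton ((AdicCompletion (maximalIdeal R) R) →ₗ[R] R) ∧
    ¬ Module.Free R (AdicCompletion (maximalIdeal R) R) ∧
    ¬ Module.Finite R (AdicCompletion (maximalIdeal R) R) := by
  set I := maximalIdeal R with hIdef
  have hItop : I ≠ ⊤ := (maximalIdeal.isMaximal R).ne_top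
  have hKrull : (⨅ n : ℕ, I ^ n) = ⊥ := Ideal.iInf_pow_eq_bot_of_isDomain I hItop
  have hof_inj : Function.Injective (of I R) := by
    intro u v huv
    have hmem : u - v ∈ (⨅ n : ℕ, I ^ n) := by
      rw [Submodule.mem_iInf]
      intro n
      refine mem_of_of_mem I n _ ?_
      rw [map_sub, huv, sub_self]
      exact Submodule.zero_mem _
    rw [hKrull, Submodule.mem_bot, sub_eq_zero] at hmem
    exact hmem
  -- flatness and regularity
  have hflat : Module.Flat R (AdicCompletion I R) := AdicCompletion.flat_of_isNoetherian (I := I)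
  -- every linear functional is zero
  have hzero : ∀ f : (AdicCompletion I R) →ₗ[R] R, f = 0 := by
    intro f
    set c := f (of I R 1) with hcdef
    by_cases hc0 : c = 0
    · refine LinearMap.ext fun x => ?_
      have hst := hom_eq_smul I f x
      rw [← hcdef, hc0, zero_smul] at hst
      have : f x = 0 := hof_inj (by rw [hst, _root_.map_zero])
      simpa using this
    · exfalso
      apply hR
      have hH : IsHausdorff I R := by
        constructor
        intro x hx
        have : x ∈ (⨅ n : ℕ, I ^ n) := by
          rw [Submodule.mem_iInf]
          intro n
          have := (SModEq.zero).mp (hx n)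
          rwa [smul_top_R] at this
        rwa [hKrull, Submodule.mem_bot] at this
      have hreg : IsSMulRegular (AdicCompletion I R) c := by
        have hregR : IsSMulRegular R c := fun u v huv => by
          simpa using mul_left_cancel₀ hc0 (by simpa [smul_eq_mul] using huv)
        have hreg2 : IsSMulRegular ((AdicCompletion I R) ⊗[R] R) c :=
          hregR.lTensor (AdicCompletion I R)
        intro u v huv
        let e := TensorProduct.rid R (AdicCompletion I R)
        have h1 : e.symm u = e.symm v :=
          hreg2 (show c • e.symm u = c • e.symm v by
            rw [← _root_.map_smul, ← _root_.map_smul]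
            exact congrArg e.symm huv)
        simpa using congrArg e h1
      have hP : IsPrecomplete I R := by
        constructor
        intro aseq haseq
        set a : AdicCauchySequence I R := ⟨aseq, fun hmn => haseq hmn⟩ with ha
        set x := AdicCompletion.mk I R a with hx
        set s := f x with hs
        have hsn : ∀ n, s - c * aseq n ∈ I ^ n := by
          intro n
          have h1 := sub_of_mem I a n
          have h2 : f (x - of I R (a n)) ∈ I ^ n := by
            have h := Submodule.mem_map_of_mem (f := f) h1
            rw [Submodule.map_smul''] at h
            have h3 : (I ^ n) • Submodule.map f ⊤ ≤ (I ^ n • ⊤ : Submodule R R) :=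
              smul_mono_right _ le_top
            have := h3 h
            rwa [smul_top_R] at this
          have e1 : f (of I R (a n)) = c * aseq n := by
            have h4 : of I R (a n) = (a n) • of I R 1 := by rw [← map_smul, smul_eq_mul, mul_one]
            rw [h4, map_smul, smul_eq_mul, mul_comm]
          rw [map_sub, e1] at h2
          exact h2
        -- divisibility of s by c, via Krull intersection in R/(c)
        have hdvd : ∃ t, s = c * t := by
          set J : Ideal R := Ideal.span {c} with hJ
          have hbot : (⨅ n : ℕ, I ^ n • ⊤ : Submodule R (R ⧸ J)) = ⊥ :=
            Ideal.iInf_pow_smul_eq_bot_of_isLocalRing (M := R ⧸ J) I hItop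
          have hmem : Submodule.mkQ (J : Submodule R R) s ∈
              (⨅ n : ℕ, I ^ n • ⊤ : Submodule R (R ⧸ J)) := by
            rw [Submodule.mem_iInf]
            intro n
            have h5 : Submodule.mkQ (J : Submodule R R) s
                = Submodule.mkQ (J : Submodule R R) (s - c * aseq n) := by
              rw [Submodule.mkQ_apply, Submodule.mkQ_apply, Submodule.Quotient.eq]
              have : s - (s - c * aseq n) = c * aseq n := by ring
              rw [this]
              exact Ideal.mem_span_singleton'.mpr ⟨aseq n, mul_comm _ _⟩
            rw [h5]
            have h6 : Submodule.mkQ (J : Submodule R R) (s - c * aseq n)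
                = (s - c * aseq n) • Submodule.mkQ (J : Submodule R R) 1 := by
              rw [← map_smul, smul_eq_mul, mul_one]
            rw [h6]
            exact Submodule.smul_mem_smul (hsn n) Submodule.mem_top
          rw [hbot, Submodule.mem_bot, Submodule.mkQ_apply, Submodule.Quotient.mk_eq_zero] at hmem
          obtain ⟨t, ht⟩ := Ideal.mem_span_singleton'.mp hmem
          exact ⟨t, by rw [← ht, mul_comm]⟩
        obtain ⟨t, ht⟩ := hdvd
        have hof_t : of I R t = x := by
          have hst := hom_eq_smul I f x
          rw [← hcdef, ← hs] at hst
          have h8 : of I R s = c • of I R t := by rw [ht, ← smul_eq_mul, map_smul]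
          exact hreg (show c • of I R t = c • x by rw [← h8, hst])
        refine ⟨t, fun n => ?_⟩
        rw [SModEq.sub_mem, smul_top_R]
        refine mem_of_of_mem I n _ ?_
        have h7 : of I R (aseq n - t) = -(x - of I R (a n)) := by
          rw [map_sub, hof_t, neg_sub]
        rw [h7]
        exact Submodule.neg_mem _ (sub_of_mem I a n)
      exact { toIsHausdorff := hH, toIsPrecomplete := hP }
  have hnt : Nontrivial (AdicCompletion I R) :=
    ⟨of I R 1, of I R 0, fun h => one_ne_zero (hof_inj h)⟩
  have hnotfree : ¬ Module.Free R (AdicCompletion I R) := by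
    intro hfree
    obtain ⟨i⟩ : Nonempty (Module.Free.ChooseBasisIndex R (AdicCompletion I R)) := inferInstance
    set b := Module.Free.chooseBasis R (AdicCompletion I R) with hb
    have h1 : b.coord i (b i) = 1 := by simp [Module.Basis.coord_apply]
    rw [hzero (b.coord i)] at h1
    simp at h1
  refine ⟨⟨fun f g => by rw [hzero f, hzero g]⟩, hnotfree, ?_⟩
  intro hfin
  have := Module.finitePresentation_of_finite R (AdicCompletion I R)
  exact hnotfree Module.free_of_flat_of_isLocalRing
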